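/- Let n be a positive integer and ε_a = e^{2πia/n}. Then ∑_{a=1}^{n-1} 1/|1 - ε_a| ≤ n log n. -/

import Mathlib

open Complex Real

lemma abs_one_sub_exp_eq (θ : ℝ) :
    ‖1 - Complex.exp (θ * I)‖ = 2 * |Real.sin (θ/2)| := by
  rw [Complex.exp_mul_I]
  rw [show (1 : ℂ) - (Complex.cos θ + Complex.sin θ * I)
      = Complex.mk (1 - Real.cos θ) (-Real.sin θ) by
    simp [Complex.ext_iff, Complex.cos_ofReal_re, Complex.sin_ofReal_re]]
  rw [Complex.norm_def, Complex.normSq_mk]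
  rw [show (1 - Real.cos θ) * (1 - Real.cos θ) + -Real.sin θ * -Real.sin θ
      = (2*|Real.sin (θ/2)|)^2 by
    have h1 := Real.cos_sq (θ/2)
    rw [mul_div_cancel₀ θ (two_ne_zero)] at h1
    have h2 := Real.sin_sq_add_cos_sq (θ/2)
    have h3 := Real.sin_sq_add_cos_sq θ
    rw [mul_pow, _root_.sq_abs]
    nlinarith]
  exact Real.sqrt_sq (by positivity)

theorem sum_inv_abs_one_sub_root_of_unity_le (n : ℕ) (hn : 0 < n) :
    ∑ a ∈ Finset.Ico 1 n,
        1 / ‖1 - Complex.exp (2 * Real.pi * Complex.I * a / n)‖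
      ≤ n * Real.log n := by
  rcases eq_or_lt_of_le (show 1 ≤ n from hn) with h1 | hn2
  · simp [← h1]
  have hnR : (2:ℝ) ≤ n := by exact_mod_cast hn2
  have hπ := Real.pi_pos
  have hnpos : (0:ℝ) < n := by linarith
  have key : ∀ a ∈ Finset.Ico 1 n,
      1 / ‖1 - Complex.exp (2 * Real.pi * Complex.I * a / n)‖
        ≤ (n:ℝ)/4 * (1/a + 1/((n:ℝ)-a)) := by
    intro a ha
    obtain ⟨ha1, ha2⟩ := Finset.mem_Ico.mp ha
    have ha1R : (1:ℝ) ≤ (a:ℝ) := by exact_mod_cast ha1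
    have ha2R : (a:ℝ) < n := by exact_mod_cast ha2
    have harg : 2 * Real.pi * Complex.I * a / n = ((2 * Real.pi * a / n : ℝ) : ℂ) * I := by
      push_cast; ring
    rw [harg, abs_one_sub_exp_eq]
    have hhalf : (2 * Real.pi * a / n) / 2 = Real.pi * a / n := by ring
    rw [hhalf]
    set x := Real.pi * a / n with hx
    have hx0 : 0 < x := by rw [hx]; positivity
    have hxπ : x < Real.pi := by
      rw [hx, div_lt_iff₀ hnpos]; nlinarith
    have hsin0 : 0 < Real.sin x := Real.sin_pos_of_pos_of_lt_pi hx0 hxπ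
    rw [abs_of_pos hsin0]
    have hmin : 2/(n:ℝ) * min (a:ℝ) ((n:ℝ)-a) ≤ Real.sin x := by
      rcases le_total ((a:ℝ)) ((n:ℝ)-a) with hc | hc
      · have hx2 : x ≤ Real.pi/2 := by
          rw [hx, div_le_div_iff₀ hnpos two_pos]; nlinarith
        rw [min_eq_left hc]
        calc 2/(n:ℝ) * a = 2/Real.pi * x := by rw [hx]; field_simp
          _ ≤ Real.sin x := Real.mul_le_sin hx0.le hx2
      · rw [← Real.sin_pi_sub x, min_eq_right hc]
        have h0 : 0 ≤ Real.pi - x := by linarith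
        have h2' : Real.pi - x ≤ Real.pi/2 := by
          have : Real.pi/2 ≤ x := by
            rw [hx, div_le_div_iff₀ two_pos hnpos]; nlinarith
          linarith
        calc 2/(n:ℝ) * ((n:ℝ)-a) = 2/Real.pi * (Real.pi - x) := by
              rw [hx]; field_simp
          _ ≤ _ := Real.mul_le_sin h0 h2'
    have hmin0 : 0 < min (a:ℝ) ((n:ℝ)-a) := lt_min (by linarith) (by linarith)
    have hb : 1/(2*Real.sin x) ≤ (n:ℝ)/4 * (1/ min (a:ℝ) ((n:ℝ)-a)) := by
      rw [show (n:ℝ)/4 * (1/ min (a:ℝ) ((n:ℝ)-a)) = (n:ℝ)/(4 * min (a:ℝ) ((n:ℝ)-a)) by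
        field_simp]
      rw [div_mul_eq_mul_div, div_le_iff₀ hnpos] at hmin
      rw [div_le_div_iff₀ (by positivity) (by positivity)]
      nlinarith [hmin, hmin0, hsin0, hnpos]
    refine hb.trans ?_
    have hA : (0:ℝ) < a := by linarith
    have hB : (0:ℝ) < (n:ℝ) - a := by linarith
    have hrec : 1/ min (a:ℝ) ((n:ℝ)-a) ≤ 1/(a:ℝ) + 1/((n:ℝ)-a) := by
      rcases le_total ((a:ℝ)) ((n:ℝ)-a) with hc | hc
      · rw [min_eq_left hc]
        have : (0:ℝ) ≤ 1/((n:ℝ)-a) := by positivity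
        linarith
      · rw [min_eq_right hc]
        have : (0:ℝ) ≤ 1/(a:ℝ) := by positivity
        linarith
    have h4 : (0:ℝ) ≤ (n:ℝ)/4 := by linarith
    exact mul_le_mul_of_nonneg_left hrec h4
  have hrefl : ∑ a ∈ Finset.Ico 1 n, 1/((n:ℝ)-a) = ∑ a ∈ Finset.Ico 1 n, 1/(a:ℝ) := by
    refine Finset.sum_nbij' (fun a => n - a) (fun a => n - a) ?_ ?_ ?_ ?_ ?_
    · intro a ha
      obtain ⟨ha1, ha2⟩ := Finset.mem_Ico.mp ha
      exact Finset.mem_Ico.mpr ⟨by omega, by omega⟩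
    · intro a ha
      obtain ⟨ha1, ha2⟩ := Finset.mem_Ico.mp ha
      exact Finset.mem_Ico.mpr ⟨by omega, by omega⟩
    · intro a ha; obtain ⟨ha1, ha2⟩ := Finset.mem_Ico.mp ha; omega
    · intro a ha; obtain ⟨ha1, ha2⟩ := Finset.mem_Ico.mp ha; omega
    · intro a ha
      obtain ⟨ha1, ha2⟩ := Finset.mem_Ico.mp ha
      rw [Nat.cast_sub ha2.le]
  have hharm : ∑ a ∈ Finset.Ico 1 n, 1/(a:ℝ) = (harmonic (n-1) : ℝ) := by
    rw [harmonic_eq_sum_Icc]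
    push_cast
    rw [show Finset.Icc 1 (n-1) = Finset.Ico 1 n by
      rw [← Finset.Ico_add_one_right_eq_Icc]; congr 1; omega]
    simp [one_div]
  have hlog : (harmonic (n-1) : ℝ) ≤ 2 * Real.log n := by
    refine (harmonic_le_one_add_log (n-1)).trans ?_
    have hn1 : (1:ℝ) ≤ ((n-1 : ℕ):ℝ) := by
      have : 1 ≤ n - 1 := by omega
      exact_mod_cast this
    have hcast : ((n-1 : ℕ):ℝ) = (n:ℝ) - 1 := by
      rw [Nat.cast_sub hn, Nat.cast_one]
    have hexp : Real.exp 1 * ((n:ℝ) - 1) ≤ (n:ℝ)^2 := by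
      have := Real.exp_one_lt_d9
      nlinarith
    have h1 : 1 + Real.log ((n-1:ℕ):ℝ) = Real.log (Real.exp 1 * ((n:ℝ)-1)) := by
      rw [Real.log_mul (Real.exp_ne_zero 1) (by rw [← hcast]; linarith), Real.log_exp, hcast]
    rw [h1, show 2 * Real.log (n:ℝ) = Real.log ((n:ℝ)^2) by
      rw [Real.log_pow]; push_cast; ring]
    exact Real.log_le_log (mul_pos (Real.exp_pos 1) (by linarith)) hexp
  calc ∑ a ∈ Finset.Ico 1 n,
        1 / ‖1 - Complex.exp (2 * Real.pi * Complex.I * a / n)‖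
      ≤ ∑ a ∈ Finset.Ico 1 n, (n:ℝ)/4 * (1/a + 1/((n:ℝ)-a)) := Finset.sum_le_sum key
    _ = (n:ℝ)/4 * ((∑ a ∈ Finset.Ico 1 n, 1/(a:ℝ)) + ∑ a ∈ Finset.Ico 1 n, 1/((n:ℝ)-a)) := by
        rw [← Finset.mul_sum, Finset.sum_add_distrib]
    _ = (n:ℝ)/2 * (harmonic (n-1) : ℝ) := by rw [hrefl, hharm]; ring
    _ ≤ (n:ℝ)/2 * (2 * Real.log n) := by
        exact mul_le_mul_of_nonneg_left hlog (by linarith)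
    _ = n * Real.log n := by ring
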